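/- Let p_0, …, p_n ∈ ℝ^m be the vertices of a (θ,h)-full Euclidean n-simplex, and let G be the n×n Gram matrix with entries G_{ij} = ⟨p_i − p_0, p_j − p_0⟩ for 1 ≤ i, j ≤ n. Then every eigenvalue λ_k of G satisfies θ h n^{1−n} ≤ √(λ_k) ≤ h n. -/

import Mathlib

open scoped RealInnerProductSpace

/-- If `p 0, …, p n` are the vertices of a `(θ,h)`-full Euclidean
`n`-simplex (all edges `≤ h` and `det G ≥ θ² h^(2n)` for the Gram matrix `G` of the
edge vectors at `p 0`), then every eigenvalue `μ` of `G` satisfies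
`θ h n^(1-n) ≤ √μ ≤ h n`. -/
theorem eigenvalue_bounds_of_full_simplex (n m : ℕ) (θ h : ℝ)
    (hθ : 0 < θ) (hh : 0 < h)
    (p : Fin (n + 1) → EuclideanSpace ℝ (Fin m))
    (G : Matrix (Fin n) (Fin n) ℝ)
    (hG : ∀ i j, G i j = ⟪p i.succ - p 0, p j.succ - p 0⟫)
    (hedge : ∀ i j, ‖p i - p j‖ ≤ h)
    (hfull : θ ^ 2 * h ^ (2 * n) ≤ G.det)
    (μ : ℝ) (x : Fin n → ℝ) (hx : x ≠ 0) (heig : G.mulVec x = μ • x) :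
    θ * h / (n : ℝ) ^ (n - 1) ≤ Real.sqrt μ ∧ Real.sqrt μ ≤ h * n := by
  -- n ≥ 1
  rcases Nat.eq_zero_or_pos n with rfl | hn
  · exact absurd (Subsingleton.elim x 0) hx
  have hn1 : (1 : ℝ) ≤ (n : ℝ) := by exact_mod_cast hn
  -- G is hermitian
  have hGh : G.IsHermitian := by
    ext i j
    simp only [Matrix.conjTranspose_apply, hG, star_trivial]
    exact real_inner_comm _ _
  -- G is positive semidefinite
  have hPSD : G.PosSemidef := by
    set B : Matrix (Fin m) (Fin n) ℝ := Matrix.of fun k j => (p j.succ - p 0) k with hBdef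
    have hB : G = B.conjTranspose * B := by
      ext i j
      simp [Matrix.mul_apply, Matrix.conjTranspose_apply, hG, PiLp.inner_apply,
        RCLike.inner_apply, PiLp.sub_apply, hBdef]
      exact Finset.sum_congr rfl (fun _ _ => mul_comm _ _)
    rw [hB]
    exact Matrix.posSemidef_conjTranspose_mul_self B
  have hev0 : ∀ i, 0 ≤ hGh.eigenvalues i := fun i => hPSD.eigenvalues_nonneg i
  -- diagonal entries ≤ h^2
  have hdiag : ∀ i, G i i ≤ h ^ 2 := by
    intro i
    rw [hG, real_inner_self_eq_norm_sq]
    have := hedge i.succ 0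
    rw [← dist_eq_norm] at this ⊢
    nlinarith [dist_nonneg (x := p i.succ) (y := p 0)]
  -- trace bound
  have htr : G.trace ≤ n * h ^ 2 := by
    rw [Matrix.trace]
    calc ∑ i, G.diag i ≤ ∑ _i : Fin n, h ^ 2 := Finset.sum_le_sum fun i _ => hdiag i
      _ = n * h ^ 2 := by simp [mul_comm]
  have htr_eq : G.trace = ∑ i, hGh.eigenvalues i := by
    nth_rewrite 1 [hGh.spectral_theorem]
    rw [Unitary.conjStarAlgAut_apply, Matrix.trace_mul_cycle, Unitary.coe_star_mul_self, one_mul, Matrix.trace_diagonal]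
    simp
  -- each eigenvalue ≤ n h^2
  have hevub : ∀ i, hGh.eigenvalues i ≤ n * h ^ 2 := by
    intro i
    calc hGh.eigenvalues i ≤ ∑ j, hGh.eigenvalues j :=
          Finset.single_le_sum (fun j _ => hev0 j) (Finset.mem_univ i)
      _ = G.trace := htr_eq.symm
      _ ≤ n * h ^ 2 := htr
  -- μ is an eigenvalue
  have hdet0 : (G - μ • 1).det = 0 := by
    rw [← Matrix.exists_mulVec_eq_zero_iff]
    refine ⟨x, hx, ?_⟩
    rw [Matrix.sub_mulVec, heig, Matrix.smul_mulVec, Matrix.one_mulVec, sub_self]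
  have hfact : (G - μ • 1).det = ∏ i, (hGh.eigenvalues i - μ) := by
    have h1 : G - μ • (1 : Matrix (Fin n) (Fin n) ℝ) =
        (hGh.eigenvectorUnitary : Matrix (Fin n) (Fin n) ℝ) *
          Matrix.diagonal (fun i => hGh.eigenvalues i - μ) *
          star (hGh.eigenvectorUnitary : Matrix (Fin n) (Fin n) ℝ) := by
      have hd : Matrix.diagonal (fun i => hGh.eigenvalues i - μ) =
          Matrix.diagonal (RCLike.ofReal ∘ hGh.eigenvalues) - μ • (1 : Matrix (Fin n) (Fin n) ℝ) := by
        ext i j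
        by_cases hij : i = j <;> simp [Matrix.diagonal, Matrix.one_apply, hij]
      rw [hd, Matrix.mul_sub, Matrix.sub_mul,
        ← Unitary.conjStarAlgAut_apply (S := ℝ) hGh.eigenvectorUnitary (Matrix.diagonal _),
        ← hGh.spectral_theorem]
      congr 1
      rw [Matrix.mul_smul, Matrix.smul_mul, Matrix.mul_one,
        (Matrix.mem_unitaryGroup_iff).mp (hGh.eigenvectorUnitary).2]
    rw [h1, Matrix.det_mul_right_comm,
      (Matrix.mem_unitaryGroup_iff).mp (hGh.eigenvectorUnitary).2, one_mul,
      Matrix.det_diagonal]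
  obtain ⟨k, -, hk⟩ := Finset.prod_eq_zero_iff.mp (hfact ▸ hdet0)
  have hμk : μ = hGh.eigenvalues k := by linarith [sub_eq_zero.mp hk]
  have hμ0 : 0 ≤ μ := hμk ▸ hev0 k
  constructor
  · -- lower bound: μ * (n h²)^(n-1) ≥ det ≥ θ² h^(2n)
    have hdetprod : G.det = ∏ i, hGh.eigenvalues i := by
      have := hGh.det_eq_prod_eigenvalues
      simpa using this
    have hrest : ∏ i ∈ Finset.univ.erase k, hGh.eigenvalues i ≤ ((n : ℝ) * h ^ 2) ^ (n - 1) := by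
      calc ∏ i ∈ Finset.univ.erase k, hGh.eigenvalues i
          ≤ ∏ _i ∈ Finset.univ.erase k, ((n : ℝ) * h ^ 2) :=
            Finset.prod_le_prod (fun i _ => hev0 i) (fun i _ => hevub i)
        _ = (n * h ^ 2) ^ (n - 1) := by
            rw [Finset.prod_const, Finset.card_erase_of_mem (Finset.mem_univ k),
              Finset.card_univ, Fintype.card_fin]
    have hprod_le : ∏ i, hGh.eigenvalues i ≤ μ * (n * h ^ 2) ^ (n - 1) := by
      calc ∏ i, hGh.eigenvalues i
          = hGh.eigenvalues k * ∏ i ∈ Finset.univ.erase k, hGh.eigenvalues i :=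
            (Finset.mul_prod_erase _ _ (Finset.mem_univ k)).symm
        _ ≤ hGh.eigenvalues k * ((n : ℝ) * h ^ 2) ^ (n - 1) :=
            mul_le_mul_of_nonneg_left hrest (hev0 k)
        _ = μ * (n * h ^ 2) ^ (n - 1) := by rw [hμk]
    have hkey : θ ^ 2 * h ^ (2 * n) ≤ μ * (n * h ^ 2) ^ (n - 1) := by
      calc θ ^ 2 * h ^ (2 * n) ≤ G.det := hfull
        _ = ∏ i, hGh.eigenvalues i := hdetprod
        _ ≤ _ := hprod_le
    -- deduce μ ≥ θ² h² / n^(n-1)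
    have hnpow : (0:ℝ) < (n : ℝ) ^ (n - 1) := by positivity
    have hμlb : θ ^ 2 * h ^ 2 / (n : ℝ) ^ (n - 1) ≤ μ := by
      rw [div_le_iff₀ hnpow]
      have hexp : h ^ (2 * n) = h ^ 2 * h ^ (2 * (n - 1)) := by
        rw [← pow_add]
        congr 1
        omega
      have : (n * h ^ 2 : ℝ) ^ (n - 1) = (n : ℝ) ^ (n - 1) * h ^ (2 * (n - 1)) := by
        rw [mul_pow, ← pow_mul]
      nlinarith [pow_pos hh (2 * (n - 1)), pow_pos hh 2, sq_nonneg θ]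
    have hgoal : (θ * h / (n : ℝ) ^ (n - 1)) ^ 2 ≤ μ := by
      have hN : (1:ℝ) ≤ (n : ℝ) ^ (n - 1) := one_le_pow₀ hn1
      have heq : (θ * h / (n : ℝ) ^ (n - 1)) ^ 2
          = θ ^ 2 * h ^ 2 / ((n : ℝ) ^ (n - 1)) ^ 2 := by ring
      rw [heq]
      refine le_trans ?_ hμlb
      apply div_le_div_of_nonneg_left (by positivity) hnpow
      nlinarith
    calc θ * h / (n : ℝ) ^ (n - 1) = Real.sqrt ((θ * h / (n : ℝ) ^ (n - 1)) ^ 2) := by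
          rw [Real.sqrt_sq (by positivity)]
      _ ≤ Real.sqrt μ := Real.sqrt_le_sqrt hgoal
  · -- upper bound
    have hμub : μ ≤ (h * n) ^ 2 := by
      have := hμk ▸ hevub k
      have h2 : (n:ℝ) ≤ (n:ℝ)^2 := by nlinarith
      nlinarith [sq_nonneg h]
    calc Real.sqrt μ ≤ Real.sqrt ((h * n) ^ 2) := Real.sqrt_le_sqrt hμub
      _ = h * n := Real.sqrt_sq (by positivity)
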